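/- Let M be a real symmetric positive definite m×m matrix, L a real m×n matrix, and N a real symmetric negative definite n×n matrix. Then the block matrix [[M, L], [Lᵀ, N]] is invertible, and for every real m×k matrix θ and every real n×k matrix ξ, the symmetric k×k matrix θᵀ M⁻¹ θ − [θᵀ, ξᵀ] · [[M, L], [Lᵀ, N]]⁻¹ · [θ; ξ] is positive semidefinite. -/

import Mathlib

open Matrix

/-- For `M` positive definite and `N` negative definite, the block matrix
`[[M, L], [Lᵀ, N]]` is invertible and the quadratic form of its inverse is
dominated by `θᵀ M⁻¹ θ`. -/
theorem block_inverse_quad_form_le {m n : ℕ}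
    (M : Matrix (Fin m) (Fin m) ℝ) (L : Matrix (Fin m) (Fin n) ℝ)
    (N : Matrix (Fin n) (Fin n) ℝ)
    (hM : M.PosDef) (hN : (-N).PosDef) :
    IsUnit (Matrix.fromBlocks M L Lᵀ N) ∧
      ∀ (k : ℕ) (θ : Matrix (Fin m) (Fin k) ℝ) (ξ : Matrix (Fin n) (Fin k) ℝ),
        (θᵀ * M⁻¹ * θ -
          Matrix.fromCols θᵀ ξᵀ * (Matrix.fromBlocks M L Lᵀ N)⁻¹ *
            Matrix.fromRows θ ξ).PosSemidef := by
  haveI := hM.isUnit.invertible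
  have hMinv : (⅟M : Matrix (Fin m) (Fin m) ℝ) = M⁻¹ := invOf_eq_nonsing_inv M
  set S : Matrix (Fin n) (Fin n) ℝ := N - Lᵀ * ⅟M * L with hSdef
  have hSneg : (-S).PosDef := by
    have h1 : (Lᵀ * ⅟M * L).PosSemidef := by
      have := hM.inv.posSemidef.conjTranspose_mul_mul_same (B := L)
      rwa [conjTranspose_eq_transpose_of_trivial, ← hMinv] at this
    have h2 := hN.add_posSemidef h1
    rw [hSdef, neg_sub, sub_eq_neg_add]
    exact h2
  haveI hSinv : Invertible S :=
    Invertible.copy (letI := hSneg.isUnit.invertible; invertibleNeg (-S)) S (neg_neg S).symm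
  haveI hBinv : Invertible (fromBlocks M L Lᵀ N) := fromBlocks₁₁Invertible M L Lᵀ N
  refine ⟨isUnit_of_invertible _, fun k θ ξ => ?_⟩
  have hAinv : (fromBlocks M L Lᵀ N)⁻¹ =
      fromBlocks (⅟M + ⅟M * L * ⅟S * Lᵀ * ⅟M) (-(⅟M * L * ⅟S)) (-(⅟S * Lᵀ * ⅟M)) (⅟S) := by
    rw [← invOf_eq_nonsing_inv]
    exact invOf_fromBlocks₁₁_eq M L Lᵀ N
  have hMT : (⅟M : Matrix (Fin m) (Fin m) ℝ)ᵀ = ⅟M := by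
    rw [hMinv, transpose_nonsing_inv]
    congr 1
    simpa [conjTranspose_eq_transpose_of_trivial] using hM.isHermitian.eq
  have hnegS : (-S)⁻¹ = -(⅟S) := by
    haveI := hSneg.isUnit.invertible
    rw [← invOf_eq_nonsing_inv]
    exact invOf_neg S
  set w : Matrix (Fin n) (Fin k) ℝ := Lᵀ * ⅟M * θ - ξ with hw
  have key : θᵀ * M⁻¹ * θ - fromCols θᵀ ξᵀ * (fromBlocks M L Lᵀ N)⁻¹ * fromRows θ ξ
      = wᵀ * (-S)⁻¹ * w := by
    rw [hAinv, fromCols_mul_fromBlocks, fromCols_mul_fromRows, hnegS, hw, ← hMinv]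
    simp only [transpose_sub, transpose_mul, transpose_transpose, hMT]
    simp only [Matrix.mul_sub, Matrix.sub_mul, Matrix.mul_add, Matrix.add_mul,
      Matrix.neg_mul, Matrix.mul_neg, neg_neg, Matrix.mul_assoc, sub_eq_add_neg, neg_add]
    abel
  rw [key]
  have := hSneg.inv.posSemidef.conjTranspose_mul_mul_same (B := w)
  rwa [conjTranspose_eq_transpose_of_trivial] at this
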